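/- Let g : ℝⁿ → ℝᵐ satisfy g(0) = 0, let g be differentiable on the closed ball B = {x : ‖x‖ ≤ ρ} with derivative L-Lipschitz on B in the operator norm (‖g'(x) − g'(x')‖ ≤ L‖x − x'‖ for x, x' ∈ B), and suppose there is μ₀ > 0 with ‖g'(0)ᵀh‖ ≥ μ₀‖h‖ for all h ∈ ℝᵐ. Set r* = min{ρ, μ₀/(2L)}. If ‖y‖ ≤ (μ₀ − L r*) r*, then there exists x* with g(x*) = y and ‖x*‖ ≤ r*. -/

import Mathlib

set_option maxHeartbeats 1000000


/-- single-point condition with `r* = min{ρ, μ₀/(2L)}`. -/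
theorem stmt5 {n m : ℕ} (ρ L μ₀ : ℝ) (hρ : 0 < ρ) (hL : 0 < L) (hμ₀ : 0 < μ₀)
    (g : EuclideanSpace ℝ (Fin n) → EuclideanSpace ℝ (Fin m))
    (g' : EuclideanSpace ℝ (Fin n) →
      (EuclideanSpace ℝ (Fin n) →L[ℝ] EuclideanSpace ℝ (Fin m)))
    (hg0 : g 0 = 0)
    (hdiff : ∀ x ∈ Metric.closedBall (0 : EuclideanSpace ℝ (Fin n)) ρ,
      HasFDerivWithinAt g (g' x) (Metric.closedBall 0 ρ) x)
    (hLip : ∀ x ∈ Metric.closedBall (0 : EuclideanSpace ℝ (Fin n)) ρ,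
      ∀ x' ∈ Metric.closedBall (0 : EuclideanSpace ℝ (Fin n)) ρ,
        ‖g' x - g' x'‖ ≤ L * ‖x - x'‖)
    (hμ0 : ∀ h : EuclideanSpace ℝ (Fin m),
      μ₀ * ‖h‖ ≤ ‖ContinuousLinearMap.adjoint (g' 0) h‖)
    (y : EuclideanSpace ℝ (Fin m))
    (hy : ‖y‖ ≤ (μ₀ - L * min ρ (μ₀ / (2 * L))) * min ρ (μ₀ / (2 * L))) :
    ∃ x : EuclideanSpace ℝ (Fin n), g x = y ∧ ‖x‖ ≤ min ρ (μ₀ / (2 * L)) := by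
  classical
  set r : ℝ := min ρ (μ₀ / (2 * L)) with hrdef
  have hr0 : 0 < r := lt_min hρ (by positivity)
  have hrρ : r ≤ ρ := min_le_left _ _
  set A : EuclideanSpace ℝ (Fin n) →L[ℝ] EuclideanSpace ℝ (Fin m) := g' 0 with hAdef
  set At : EuclideanSpace ℝ (Fin m) →L[ℝ] EuclideanSpace ℝ (Fin n) :=
    ContinuousLinearMap.adjoint A with hAtdef
  -- `S = A ∘ Aᵀ` is injective, hence bijective
  set S : EuclideanSpace ℝ (Fin m) →L[ℝ] EuclideanSpace ℝ (Fin m) := A.comp At with hSdef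
  have hSker : ∀ w, S w = 0 → w = 0 := by
    intro w hw
    have h1 : (inner ℝ (At w) (At w) : ℝ) = inner ℝ w (S w) :=
      ContinuousLinearMap.adjoint_inner_left A (At w) w
    have h2 : ‖At w‖ = 0 := by
      have h0 : (inner ℝ (At w) (At w) : ℝ) = 0 := by rw [h1, hw, inner_zero_right]
      have h0' : ‖At w‖ ^ 2 = 0 := by rw [← real_inner_self_eq_norm_sq, h0]
      exact (pow_eq_zero_iff two_ne_zero).mp h0'
    have h3 : μ₀ * ‖w‖ ≤ 0 := by
      have := hμ0 w
      rw [h2] at this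
      exact this
    have : ‖w‖ = 0 := le_antisymm (by nlinarith [norm_nonneg w]) (norm_nonneg _)
    exact norm_eq_zero.mp this
  have hSinj : Function.Injective S := by
    intro u v huv
    have : S (u - v) = 0 := by rw [map_sub, huv, sub_self]
    have := hSker _ this
    exact sub_eq_zero.mp this
  have hSsurj : Function.Surjective S := by
    have h := LinearMap.injective_iff_surjective
      (f := (S : EuclideanSpace ℝ (Fin m) →ₗ[ℝ] EuclideanSpace ℝ (Fin m)))
    exact h.mp hSinj
  -- explicit right inverse with norm bound `μ₀⁻¹`
  have key : ∀ y' : EuclideanSpace ℝ (Fin m), ∃ x, A x = y' ∧ ‖x‖ ≤ μ₀⁻¹ * ‖y'‖ := by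
    intro y'
    obtain ⟨u, hu⟩ := hSsurj y'
    refine ⟨At u, hu, ?_⟩
    have h1 : (inner ℝ (At u) (At u) : ℝ) = inner ℝ u y' := by
      rw [← hu]
      exact ContinuousLinearMap.adjoint_inner_left A (At u) u
    have h2 : (inner ℝ (u : EuclideanSpace ℝ (Fin m)) y' : ℝ) ≤ ‖u‖ * ‖y'‖ :=
      real_inner_le_norm u y'
    have h3 : μ₀ * ‖u‖ ≤ ‖At u‖ := hμ0 u
    have h4 : ‖At u‖ ^ 2 ≤ ‖u‖ * ‖y'‖ := by
      rw [← real_inner_self_eq_norm_sq]; rw [h1]; exact h2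
    have h5 : μ₀ * ‖At u‖ ≤ ‖y'‖ := by
      rcases eq_or_lt_of_le (norm_nonneg (At u)) with h | h
      · rw [← h, mul_zero]; exact norm_nonneg y'
      · have c1 : μ₀ * ‖At u‖ ^ 2 ≤ μ₀ * (‖u‖ * ‖y'‖) :=
          mul_le_mul_of_nonneg_left h4 hμ₀.le
        have c2 : μ₀ * ‖u‖ * ‖y'‖ ≤ ‖At u‖ * ‖y'‖ :=
          mul_le_mul_of_nonneg_right h3 (norm_nonneg _)
        have c3 : μ₀ * ‖At u‖ * ‖At u‖ ≤ ‖y'‖ * ‖At u‖ := by nlinarith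
        exact le_of_mul_le_mul_right c3 h
    calc ‖At u‖ = μ₀⁻¹ * (μ₀ * ‖At u‖) := by field_simp
      _ ≤ μ₀⁻¹ * ‖y'‖ := mul_le_mul_of_nonneg_left h5 (by positivity)
  let f'symm : A.NonlinearRightInverse :=
    { toFun := fun y' => (key y').choose
      nnnorm := ⟨μ₀⁻¹, by positivity⟩
      bound' := fun y' => (key y').choose_spec.2
      right_inv' := fun y' => (key y').choose_spec.1 }
  -- g approximates A on the small ball with constant L * r
  have hball : Metric.closedBall (0 : EuclideanSpace ℝ (Fin n)) r ⊆ Metric.closedBall 0 ρ :=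
    Metric.closedBall_subset_closedBall hrρ
  have happrox : ApproximatesLinearOn g A (Metric.closedBall 0 r) ⟨L * r, by positivity⟩ := by
    intro x hx x' hx'
    have hmean := Convex.norm_image_sub_le_of_norm_hasFDerivWithin_le'
      (f := g) (f' := g') (φ := A) (C := L * r)
      (hs := convex_closedBall (0 : EuclideanSpace ℝ (Fin n)) r)
      (fun z hz => (hdiff z (hball hz)).mono hball)
      (fun z hz => by
        have := hLip z (hball hz) 0 (Metric.mem_closedBall_self hρ.le)
        simp only [sub_zero] at this
        have hz' : ‖z‖ ≤ r := by simpa [Metric.mem_closedBall, dist_zero_right] using hz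
        calc ‖g' z - A‖ ≤ L * ‖z‖ := this
          _ ≤ L * r := by nlinarith)
      hx' hx
    exact_mod_cast hmean
  have hsurj := happrox.surjOn_closedBall_of_nonlinearRightInverse f'symm hr0.le (subset_refl _)
  have hyy : y ∈ Metric.closedBall (g 0)
      (((f'symm.nnnorm : ℝ)⁻¹ - ((⟨L * r, by positivity⟩ : NNReal) : ℝ)) * r) := by
    rw [hg0]
    have hnn : (f'symm.nnnorm : ℝ) = μ₀⁻¹ := rfl
    rw [Metric.mem_closedBall, dist_zero_right, hnn, inv_inv]
    exact_mod_cast hy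
  obtain ⟨x, hx, hgx⟩ := hsurj hyy
  exact ⟨x, hgx, by simpa [Metric.mem_closedBall, dist_zero_right] using hx⟩
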